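/- For any integer N ≥ 2, the polynomial 1 − z^{N+2} − ((N+2)/N)(z − z^{N+1}) factors as (1−z)³ · ∏_{j=1}^{⌊(N−1)/2⌋}[z² + 1 + 2z(1 − 2ν_j²)] · (1+z if N even, else 1), where {ν_j} is the set of positive real zeros of U_N'. -/

import Mathlib

open Polynomial Finset

namespace Stmt6Aux
open Polynomial.Chebyshev

lemma auxD (n : ℤ) : (X^2 - 1) * derivative (U ℝ n) =
    ((n : ℝ[X]) + 1) * T ℝ (n+1) - X * U ℝ n := by
  have h1 := congrArg derivative (Chebyshev.T_eq_X_mul_T_sub_pol_U ℝ n)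
  have hUT := Chebyshev.U_eq_X_mul_U_add_T ℝ n
  rw [T_derivative_eq_U] at h1
  have h2 : (n : ℤ) + 2 - 1 = n + 1 := by ring
  simp only [derivative_sub, derivative_mul, derivative_X, derivative_one, derivative_X_pow,
    T_derivative_eq_U, add_sub_cancel_right, h2, Polynomial.C_eq_natCast, Nat.cast_ofNat] at h1
  rw [show (Polynomial.C 2 : ℝ[X]) = 2 from map_ofNat _ 2] at h1
  push_cast at h1 ⊢
  linear_combination (n+2 : ℝ[X]) * hUT - h1

lemma auxTU (w : ℝ) (hw : w ≠ 0) (hw1 : w^2 - 1 ≠ 0) (n : ℕ) :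
    (T ℝ n).eval ((w^2+1)/(2*w)) = (w^(2*n)+1)/(2*w^n) ∧
    (U ℝ n).eval ((w^2+1)/(2*w)) = (w^(2*n+2)-1)/((w^2-1)*w^n) := by
  induction n using Nat.twoStepInduction with
  | zero => simp [Chebyshev.T_zero, Chebyshev.U_zero]; field_simp
  | one =>
    constructor
    · simp [Chebyshev.T_one]
    · show (U ℝ 1).eval _ = _
      rw [Chebyshev.U_one]
      simp only [eval_mul, eval_ofNat, eval_X]
      field_simp
      ring
  | more n ih1 ih2 =>
    have hc : ((n : ℤ) + 2) = ((n + 2 : ℕ) : ℤ) := by push_cast; ring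
    have hc1 : ((n : ℤ) + 1) = ((n + 1 : ℕ) : ℤ) := by push_cast; ring
    have hT := Chebyshev.T_add_two ℝ (n : ℤ)
    have hU := Chebyshev.U_add_two ℝ (n : ℤ)
    rw [hc, hc1] at hT hU
    constructor
    · rw [hT]
      simp only [eval_sub, eval_mul, eval_ofNat, eval_X, ih1.1, ih2.1]
      field_simp
      ring
    · rw [hU]
      simp only [eval_sub, eval_mul, eval_ofNat, eval_X, ih1.2, ih2.2]
      field_simp
      ring

lemma auxPar (n : ℕ) : (U ℝ n).comp (-X) = (-1)^n * U ℝ n := by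
  induction n using Nat.twoStepInduction with
  | zero => simp [Chebyshev.U_zero]
  | one => rw [show ((1:ℕ):ℤ) = 1 by norm_num, Chebyshev.U_one]; simp
  | more n ih1 ih2 =>
    have hc : ((n : ℤ) + 2) = ((n + 2 : ℕ) : ℤ) := by push_cast; ring
    have hc1 : ((n : ℤ) + 1) = ((n + 1 : ℕ) : ℤ) := by push_cast; ring
    have hU := Chebyshev.U_add_two ℝ (n : ℤ)
    rw [hc, hc1] at hU
    rw [hU]
    simp only [sub_comp, mul_comp, ofNat_comp, X_comp, ih1, ih2]
    ring

lemma auxDeg (n : ℕ) : (U ℝ n).natDegree = n ∧ (U ℝ n).coeff n = 2^n := by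
  induction n using Nat.twoStepInduction with
  | zero => simp [Chebyshev.U_zero]
  | one =>
    rw [show ((1:ℕ):ℤ) = 1 by norm_num, Chebyshev.U_one]
    constructor
    · compute_degree!
    · simp
  | more n ih1 ih2 =>
    have hc : ((n : ℤ) + 2) = ((n + 2 : ℕ) : ℤ) := by push_cast; ring
    have hc1 : ((n : ℤ) + 1) = ((n + 1 : ℕ) : ℤ) := by push_cast; ring
    have hU := Chebyshev.U_add_two ℝ (n : ℤ)
    rw [hc, hc1] at hU
    have h2C : (2 : ℝ[X]) * X * U ℝ ((n+1 : ℕ) : ℤ) = Polynomial.C 2 * (X * U ℝ ((n+1:ℕ):ℤ)) := by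
      rw [show (Polynomial.C 2 : ℝ[X]) = 2 from map_ofNat _ 2]; ring
    have hcoeff : (U ℝ ((n+2 : ℕ) : ℤ)).coeff (n+2) = 2^(n+2) := by
      rw [hU, coeff_sub, h2C, coeff_C_mul, coeff_X_mul, ih2.2,
        coeff_eq_zero_of_natDegree_lt (by rw [ih1.1]; omega)]
      ring
    refine ⟨natDegree_eq_of_le_of_coeff_ne_zero ?_ (by rw [hcoeff]; positivity), hcoeff⟩
    rw [hU]
    refine le_trans (natDegree_sub_le _ _) ?_
    simp only [sup_le_iff]
    refine ⟨le_trans natDegree_mul_le ?_, by rw [ih1.1]; omega⟩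
    have h1 : (2 * X : ℝ[X]).natDegree ≤ 1 := by compute_degree
    rw [ih2.1]; omega

-- parity of the derivative, at evaluation level
lemma auxParD (n : ℕ) (x : ℝ) :
    (derivative (U ℝ n)).eval (-x) = (-1)^(n+1) * (derivative (U ℝ n)).eval x := by
  have h := congrArg derivative (auxPar n)
  rw [derivative_comp, derivative_neg, derivative_X, derivative_mul] at h
  have h2 : derivative ((-1 : ℝ[X])^n) = 0 := by
    rw [show ((-1 : ℝ[X]))^n = Polynomial.C ((-1)^n) by simp, derivative_C]
  rw [h2, zero_mul, zero_add] at h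
  have := congrArg (Polynomial.eval x) h
  simp only [eval_mul, eval_comp, eval_neg, eval_X, eval_pow, eval_one, eval_neg] at this ⊢
  have hne : (derivative (U ℝ (n:ℤ))).eval (-x) * (-1) = (-1)^n * (derivative (U ℝ (n:ℤ))).eval x := by
    simpa using this
  have := congrArg (· * (-1:ℝ)) hne
  calc (derivative (U ℝ (n:ℤ))).eval (-x) = (derivative (U ℝ (n:ℤ))).eval (-x) * (-1) * (-1) := by ring
  _ = (-1)^n * (derivative (U ℝ (n:ℤ))).eval x * (-1) := by rw [hne]
  _ = (-1)^(n+1) * (derivative (U ℝ (n:ℤ))).eval x := by ring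

end Stmt6Aux

open Stmt6Aux Polynomial.Chebyshev in
theorem stmt6 (N : ℕ) (hN : 2 ≤ N) (ν : Fin ((N - 1) / 2) → ℝ)
    (hinj : Function.Injective ν)
    (hν : ∀ x : ℝ,
      (0 < x ∧ (Polynomial.derivative (Polynomial.Chebyshev.U ℝ N)).eval x = 0) ↔
        ∃ j, ν j = x) :
    (1 - Polynomial.X ^ (N + 2) -
        Polynomial.C (((N : ℝ) + 2) / N) * (Polynomial.X - Polynomial.X ^ (N + 1)) :
        Polynomial ℝ) =
      (1 - Polynomial.X) ^ 3 *
        (∏ j : Fin ((N - 1) / 2),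
          (Polynomial.X ^ 2 + 1 + Polynomial.C (2 * (1 - 2 * (ν j) ^ 2)) * Polynomial.X)) *
        (if Even N then 1 + Polynomial.X else 1) := by
  have hνpos : ∀ j, 0 < ν j := fun j => ((hν (ν j)).mpr ⟨j, rfl⟩).1
  have hνroot0 : ∀ j, (Polynomial.derivative (Polynomial.Chebyshev.U ℝ N)).eval (ν j) = 0 :=
    fun j => ((hν (ν j)).mpr ⟨j, rfl⟩).2
  set p := Polynomial.derivative (Polynomial.Chebyshev.U ℝ N) with hp
  -- degree and leading coefficient of p
  have hdegU := auxDeg N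
  have hcoeffp : p.coeff (N - 1) = (N : ℝ) * 2^N := by
    rw [hp, coeff_derivative, show N - 1 + 1 = N by omega, hdegU.2]
    push_cast [show ((N - 1 : ℕ) : ℝ) = (N : ℝ) - 1 by push_cast [Nat.cast_sub (by omega : 1 ≤ N)]; ring]
    ring
  have hNne : ((N:ℝ)) ≠ 0 := by positivity
  have hcne : ((N:ℝ)) * 2^N ≠ 0 := by positivity
  have hdegp : p.natDegree = N - 1 := by
    refine natDegree_eq_of_le_of_coeff_ne_zero ?_ (by rw [hcoeffp]; exact hcne)
    calc p.natDegree ≤ (U ℝ (N:ℤ)).natDegree - 1 := natDegree_derivative_le _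
    _ = N - 1 := by rw [hdegU.1]
  have hlc : p.leadingCoeff = (N:ℝ) * 2^N := by
    rw [Polynomial.leadingCoeff, hdegp, hcoeffp]
  have hpne : p ≠ 0 := fun h => hcne (by rw [← hcoeffp, h, coeff_zero])
  -- roots
  have hνroot : ∀ j, p.eval (ν j) = 0 := hνroot0
  have hνroot' : ∀ j, p.eval (-ν j) = 0 := by
    intro j
    rw [hp, auxParD, hνroot j, mul_zero]
  have hzero : Even N → p.eval 0 = 0 := by
    intro hE
    have h := auxParD N 0
    rw [neg_zero, Even.add_one hE |>.neg_one_pow] at h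
    linarith [h]
  -- the multiset of roots
  set M : Multiset ℝ := (Finset.univ.val.map ν) + (Finset.univ.val.map (fun j => -ν j)) +
      (if Even N then {0} else 0) with hM
  have hMcard : Multiset.card M = N - 1 := by
    rw [hM]
    simp only [Multiset.card_add, Multiset.card_map]
    rcases Nat.even_or_odd N with hE | hO
    · rw [if_pos hE]
      simp only [Multiset.card_singleton]
      obtain ⟨t, ht⟩ := hE
      simp only [Finset.card_val, Finset.card_univ, Fintype.card_fin]
      omega
    · rw [if_neg (Nat.not_even_iff_odd.mpr hO)]
      obtain ⟨t, ht⟩ := hO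
      simp only [Multiset.card_zero, Finset.card_val, Finset.card_univ, Fintype.card_fin]
      omega
  have hmemA : ∀ a, a ∈ Finset.univ.val.map ν → 0 < a := by
    intro a ha
    obtain ⟨j, _, rfl⟩ := Multiset.mem_map.mp ha
    exact hνpos j
  have hmemB : ∀ a, a ∈ Finset.univ.val.map (fun j => -ν j) → a < 0 := by
    intro a ha
    obtain ⟨j, _, rfl⟩ := Multiset.mem_map.mp ha
    simpa using hνpos j
  have hmemC : ∀ a, a ∈ (if Even N then ({0} : Multiset ℝ) else 0) → a = 0 := by
    intro a ha
    split_ifs at ha with h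
    · simpa using ha
    · simp at ha
  have hMnodup : M.Nodup := by
    rw [hM, Multiset.nodup_add, Multiset.nodup_add]
    refine ⟨⟨Multiset.Nodup.map hinj Finset.univ.nodup,
      Multiset.Nodup.map (fun a b hab => hinj (by simpa using hab : ν a = ν b))
        Finset.univ.nodup, ?_⟩, ?_, ?_⟩
    · rw [Multiset.disjoint_left]
      intro a ha hb
      exact absurd (hmemB a hb) (not_lt.mpr (le_of_lt (hmemA a ha)))
    · split_ifs with h
      · exact Multiset.nodup_singleton 0
      · exact Multiset.nodup_zero
    · rw [Multiset.disjoint_left]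
      intro a ha hb
      have h0 := hmemC a hb
      rcases Multiset.mem_add.mp ha with h1 | h1
      · exact absurd (hmemA a h1) (by rw [h0]; exact lt_irrefl 0)
      · exact absurd (hmemB a h1) (by rw [h0]; exact lt_irrefl 0)
  have hMle : M ≤ p.roots := by
    rw [Multiset.le_iff_subset hMnodup]
    intro a ha
    rw [Polynomial.mem_roots hpne]
    rw [hM] at ha
    rcases Multiset.mem_add.mp ha with h1 | h1
    · rcases Multiset.mem_add.mp h1 with h2 | h2
      · obtain ⟨j, _, rfl⟩ := Multiset.mem_map.mp h2
        exact hνroot j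
      · obtain ⟨j, _, rfl⟩ := Multiset.mem_map.mp h2
        exact hνroot' j
    · have h0 := hmemC a h1
      split_ifs at h1 with h
      · rw [h0]; exact hzero h
      · simp at h1
  have hMeq : M = p.roots := by
    refine Multiset.eq_of_le_of_card_le hMle ?_
    rw [hMcard, ← hdegp]
    exact Polynomial.card_roots' p
  have hfact := Polynomial.C_leadingCoeff_mul_prod_multiset_X_sub_C
    (p := p) (by rw [← hMeq, hMcard, hdegp])
  rw [← hMeq, hlc] at hfact
  have hprodM : (M.map fun a => Polynomial.X - Polynomial.C a).prod =
      (∏ j, (Polynomial.X - Polynomial.C (ν j))) * (∏ j, (Polynomial.X + Polynomial.C (ν j))) *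
        (if Even N then Polynomial.X else 1) := by
    rw [hM]
    simp only [Multiset.map_add, Multiset.prod_add, Multiset.map_map]
    rw [← Finset.prod_eq_multiset_prod, ← Finset.prod_eq_multiset_prod]
    congr 1
    · congr 1
      exact Finset.prod_congr rfl (fun j _ => by simp [sub_neg_eq_add])
    · split_ifs with h
      · simp
      · simp
  have hfactP : p = Polynomial.C ((N:ℝ) * 2^N) *
      ((∏ j, (Polynomial.X - Polynomial.C (ν j))) * (∏ j, (Polynomial.X + Polynomial.C (ν j))) *
        (if Even N then Polynomial.X else 1)) := by
    rw [← hfact, hprodM]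
  apply Polynomial.eq_of_infinite_eval_eq
  apply Set.Infinite.mono (s := Set.Ioi (1:ℝ)) ?_ (Set.Ioi_infinite (1:ℝ))
  intro z hz
  simp only [Set.mem_Ioi] at hz
  simp only [Set.mem_setOf_eq]
  have hz0 : (0:ℝ) < z := by linarith
  set w := Real.sqrt z with hwdef
  have hzw : w^2 = z := Real.sq_sqrt (le_of_lt hz0)
  have hw1 : 1 < w := by nlinarith [Real.sqrt_nonneg z]
  have hwpos : 0 < w := by linarith
  have hw0 : w ≠ 0 := ne_of_gt hwpos
  have hw2 : w^2 - 1 ≠ 0 := by nlinarith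
  have hT := (auxTU w hw0 hw2 (N+1)).1
  have hU := (auxTU w hw0 hw2 N).2
  set x := (w^2+1)/(2*w) with hxdef
  have hx0 : 0 < x := by positivity
  have hx1 : x^2 - 1 = (w^2-1)^2/(4*w^2) := by rw [hxdef]; field_simp; ring
  have hx1' : x^2 - 1 ≠ 0 := by rw [hx1]; positivity
  have hD0 := auxD (N:ℤ)
  rw [show ((N:ℤ)+1) = ((N+1:ℕ):ℤ) by push_cast; ring] at hD0
  have hD := congrArg (Polynomial.eval x) hD0
  simp only [eval_mul, eval_sub, eval_add, eval_pow, eval_X, eval_one, eval_intCast,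
    Int.cast_natCast, eval_natCast] at hD
  rw [hT, hU] at hD
  have hevalp := congrArg (Polynomial.eval x) hfactP
  simp only [eval_mul, eval_C, eval_prod, eval_sub, eval_add, eval_X,
    apply_ite (Polynomial.eval x), eval_one] at hevalp
  rw [hevalp] at hD
  simp only [eval_sub, eval_add, eval_one, eval_pow, eval_mul, eval_C, eval_X, eval_prod,
    apply_ite (Polynomial.eval z)]
  have hquad : ∀ j ∈ Finset.univ, (fun j => z^2 + 1 + 2*(1 - 2*(ν j)^2)*z) j =
      (fun j : Fin ((N-1)/2) => (4*w^2) * ((x - ν j)*(x + ν j))) j := by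
    intro j _
    rw [← hzw, hxdef]; field_simp; ring
  set A := ∏ j : Fin ((N-1)/2), (x - ν j) with hA
  set B := ∏ j : Fin ((N-1)/2), (x + ν j) with hB
  have hP : (∏ j : Fin ((N-1)/2), (z^2 + 1 + 2*(1 - 2*(ν j)^2)*z)) =
      (4*w^2)^((N-1)/2) * (A*B) := by
    calc (∏ j : Fin ((N-1)/2), (z^2 + 1 + 2*(1 - 2*(ν j)^2)*z))
        = ∏ j : Fin ((N-1)/2), (4*w^2)*((x - ν j)*(x + ν j)) := Finset.prod_congr rfl hquad
      _ = (4*w^2)^((N-1)/2) * (A*B) := by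
          rw [Finset.prod_mul_distrib, Finset.prod_const, Finset.card_univ, Fintype.card_fin,
            Finset.prod_mul_distrib]
  rw [hP]
  rcases Nat.even_or_odd N with hE | hO
  · simp only [if_pos hE] at hD ⊢
    obtain ⟨k, hk⟩ : ∃ k, N = 2*k+2 := by obtain ⟨t, ht⟩ := hE; exact ⟨t-1, by omega⟩
    subst hk
    rw [show (2*k+2-1)/2 = k by omega]
    rw [show ((2:ℝ))^(2*k+2) = 4^(k+1) by
      rw [show (4:ℝ) = 2^2 by norm_num, ← pow_mul]; ring_nf] at hD
    push_cast at hD ⊢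
    rw [hxdef] at hD
    field_simp at hD ⊢
    rw [← hzw]
    have h16 : (16:ℝ) * w^(2*k+6) ≠ 0 := by positivity
    apply mul_right_cancel₀ h16
    linear_combination (4*w) * hD
  · simp only [if_neg (Nat.not_even_iff_odd.mpr hO)] at hD ⊢
    obtain ⟨k, hk⟩ : ∃ k, N = 2*k+3 := by obtain ⟨t, ht⟩ := hO; exact ⟨t-1, by omega⟩
    subst hk
    rw [show (2*k+3-1)/2 = k+1 by omega]
    rw [show ((2:ℝ))^(2*k+3) = 2*4^(k+1) by
      rw [show (4:ℝ) = 2^2 by norm_num, ← pow_mul]; ring_nf] at hD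
    push_cast at hD ⊢
    rw [hxdef] at hD
    field_simp at hD ⊢
    rw [← hzw]
    have h8 : (8:ℝ) * w^(2*k+6) ≠ 0 := by positivity
    apply mul_right_cancel₀ h8
    linear_combination (8*w) * hD
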